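/- Prescribed final position (Courant–Robbins 1948 form, strengthened): for every g > 0, every continuous u : ℝ → ℝ, every T > 0, and every y ∈ (0, π), there exist φ ∈ (0, π) and a solution α with α(0) = φ and α'(0) = 0 such that α(t) ∈ (0, π) for all t ∈ [0, T] and α(T) = y. In particular (y = π/2), there is an initial position for which the rod never touches the floor during [0, T] and is exactly vertical at the final moment T. -/

import Mathlib

/-- `α` is a solution of the inverted-pendulum equation
`α'' t = -g * cos (α t) + u t * sin (α t)`. -/
def IsPendulumSolution (g : ℝ) (u : ℝ → ℝ) (α : ℝ → ℝ) : Prop :=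
  ContDiff ℝ 2 α ∧
    ∀ t : ℝ, deriv (deriv α) t = -g * Real.cos (α t) + u t * Real.sin (α t)


open Set Real NNReal

noncomputable section

namespace WPend

/-- Phase-space vector field of the pendulum. -/
def F (g : ℝ) (u : ℝ → ℝ) : ℝ → ℝ × ℝ → ℝ × ℝ :=
  fun t p => (p.2, -g * Real.cos p.1 + u t * Real.sin p.1)

lemma lipschitzWith_one_cos : LipschitzWith 1 Real.cos := by
  apply lipschitzWith_of_nnnorm_deriv_le Real.differentiable_cos
  intro x
  rw [Real.deriv_cos]
  simp only [← NNReal.coe_le_coe, coe_nnnorm, NNReal.coe_one, Real.norm_eq_abs, abs_neg]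
  exact Real.abs_sin_le_one x

lemma lipschitzWith_one_sin : LipschitzWith 1 Real.sin := by
  apply lipschitzWith_of_nnnorm_deriv_le Real.differentiable_sin
  intro x
  rw [Real.deriv_sin]
  simp only [← NNReal.coe_le_coe, coe_nnnorm, NNReal.coe_one, Real.norm_eq_abs]
  exact Real.abs_cos_le_one x

lemma F_lipschitz {g M : ℝ} (hg : 0 ≤ g) (hM : 0 ≤ M) {u : ℝ → ℝ} {t : ℝ}
    (hut : |u t| ≤ M) :
    LipschitzWith ((max 1 (g + M)).toNNReal) (F g u t) := by
  have hK : (0:ℝ) ≤ max 1 (g + M) := le_trans zero_le_one (le_max_left _ _)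
  apply LipschitzWith.of_dist_le_mul
  intro p q
  rw [Real.coe_toNNReal _ hK, Prod.dist_eq, F, F]
  simp only [max_le_iff]
  constructor
  · have h2 : dist p.2 q.2 ≤ dist p q := by rw [Prod.dist_eq]; exact le_max_right _ _
    nlinarith [le_max_left 1 (g + M), dist_nonneg (x := p) (y := q)]
  · have hc : dist (Real.cos p.1) (Real.cos q.1) ≤ dist p.1 q.1 := by
      simpa using lipschitzWith_one_cos.dist_le_mul p.1 q.1
    have hs : dist (Real.sin p.1) (Real.sin q.1) ≤ dist p.1 q.1 := by
      simpa using lipschitzWith_one_sin.dist_le_mul p.1 q.1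
    have h1 : dist p.1 q.1 ≤ dist p q := by rw [Prod.dist_eq]; exact le_max_left _ _
    calc dist (-g * Real.cos p.1 + u t * Real.sin p.1)
          (-g * Real.cos q.1 + u t * Real.sin q.1)
        ≤ dist (-g * Real.cos p.1) (-g * Real.cos q.1)
            + dist (u t * Real.sin p.1) (u t * Real.sin q.1) := dist_add_add_le _ _ _ _
      _ = g * dist (Real.cos p.1) (Real.cos q.1) + |u t| * dist (Real.sin p.1) (Real.sin q.1) := by
          rw [dist_eq_norm, dist_eq_norm, dist_eq_norm, dist_eq_norm]
          rw [← mul_sub, ← mul_sub, norm_mul, norm_mul]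
          simp [abs_of_nonneg hg]
      _ ≤ g * dist p q + M * dist p q := by
          have t1 := dist_nonneg (x := Real.sin p.1) (y := Real.sin q.1)
          have t2 := dist_nonneg (x := Real.cos p.1) (y := Real.cos q.1)
          have t3 := abs_nonneg (u t)
          have t4 := dist_nonneg (x := p) (y := q)
          nlinarith [hc.trans h1, hs.trans h1, mul_le_mul hut (hs.trans h1) t1 hM,
            mul_le_mul_of_nonneg_left (hc.trans h1) hg]
      _ = (g + M) * dist p q := by ring
      _ ≤ max 1 (g + M) * dist p q :=
          mul_le_mul_of_nonneg_right (le_max_right _ _) dist_nonneg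

lemma F_norm_le {g M : ℝ} (hg : 0 ≤ g) (hM : 0 ≤ M) {u : ℝ → ℝ} {t : ℝ}
    (hut : |u t| ≤ M) (p : ℝ × ℝ) : ‖F g u t p‖ ≤ max ‖p‖ (g + M) := by
  rw [F, Prod.norm_def]
  apply max_le_max
  · exact (le_max_right _ _ : ‖p.2‖ ≤ max ‖p.1‖ ‖p.2‖)
  · have h1 : |(-g) * Real.cos p.1| ≤ g := by
      rw [abs_mul, abs_neg, abs_of_nonneg hg]
      nlinarith [Real.abs_cos_le_one p.1]
    have h2 : |u t * Real.sin p.1| ≤ M := by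
      rw [abs_mul]
      nlinarith [Real.abs_sin_le_one p.1, abs_nonneg (u t)]
    calc ‖-g * Real.cos p.1 + u t * Real.sin p.1‖ ≤ _ := norm_add_le _ _
      _ ≤ g + M := by
          simp only [Real.norm_eq_abs]; exact add_le_add h1 h2
    

lemma F_contOn {g : ℝ} {u : ℝ → ℝ} (hu : Continuous u) (p : ℝ × ℝ) :
    Continuous (fun t => F g u t p) := by
  unfold F; fun_prop

/-- One Picard–Lindelöf step of length `≤ 1/2`, with value prescribed anywhere inside. -/
lemma pl_step {g : ℝ} (hg : 0 ≤ g) {u : ℝ → ℝ} (hu : Continuous u)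
    {a b t₀ : ℝ} (ht₀ : t₀ ∈ Icc a b) (hab : b - a ≤ 1/2) (x₀ : ℝ × ℝ) :
    ∃ f : ℝ → ℝ × ℝ, f t₀ = x₀ ∧
      ∀ t ∈ Icc a b, HasDerivWithinAt f (F g u t (f t)) (Icc a b) t := by
  obtain ⟨M₀, hM₀⟩ := isCompact_Icc.exists_bound_of_continuousOn (hu.continuousOn (s := Icc a b))
  set M := max M₀ 0 with hM
  have hM0 : 0 ≤ M := le_max_right _ _
  have hMb : ∀ t ∈ Icc a b, |u t| ≤ M := fun t ht => le_trans (by simpa using hM₀ t ht) (le_max_left _ _)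
  set Q : ℝ := ‖x₀‖ + g + M with hQ
  have hQ0 : 0 ≤ Q := by positivity
  have hpl : IsPicardLindelof (F g u) (tmin := a) (tmax := b) ⟨t₀, ht₀⟩ x₀ ⟨Q + 1, by positivity⟩ 0
      ⟨2*Q + 1, by positivity⟩ ((max 1 (g + M)).toNNReal) := by
    constructor
    · exact fun t ht => (F_lipschitz hg hM0 (hMb t ht)).lipschitzOnWith
    · exact fun x _ => (F_contOn hu x).continuousOn
    · intro t ht x hx
      show ‖F g u t x‖ ≤ 2*Q + 1
      refine le_trans (F_norm_le hg hM0 (hMb t ht) x) ?_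
      have hxx : ‖x‖ ≤ ‖x₀‖ + (Q + 1) := by
        calc ‖x‖ ≤ ‖x₀‖ + ‖x - x₀‖ := by
              have := norm_sub_norm_le x x₀; linarith [abs_le.1 (abs_norm_sub_norm_le x x₀)]
        _ ≤ ‖x₀‖ + (Q + 1) := by
              have : dist x x₀ ≤ Q + 1 := Metric.mem_closedBall.1 hx
              rw [dist_eq_norm] at this; linarith
      have h1 : ‖x₀‖ ≤ Q := by rw [hQ]; linarith
      have h2 := norm_nonneg x₀
      simp only [max_le_iff]
      constructor <;> [linarith; linarith]
    · show (2*Q + 1) * max (b - t₀) (t₀ - a) ≤ Q + 1 - ((0:ℝ≥0):ℝ)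
      rw [NNReal.coe_zero, sub_zero]
      have h1 : max (b - t₀) (t₀ - a) ≤ 1/2 := by
        simp only [max_le_iff]; constructor <;> [linarith [ht₀.1]; linarith [ht₀.2]]
      calc (2*Q + 1) * max (b - t₀) (t₀ - a) ≤ (2*Q + 1) * (1/2) := by
            apply mul_le_mul_of_nonneg_left h1; positivity
        _ ≤ Q + 1 := by linarith
  obtain ⟨f, hf0, hf⟩ := hpl.exists_eq_forall_mem_Icc_hasDerivWithinAt₀
  exact ⟨f, hf0, hf⟩

/-- Time-clamped field, globally Lipschitz in space uniformly in time. -/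
def Fc (g : ℝ) (u : ℝ → ℝ) (a b : ℝ) : ℝ → ℝ × ℝ → ℝ × ℝ :=
  fun t p => F g u (max a (min b t)) p

lemma Fc_eq {g : ℝ} {u : ℝ → ℝ} {a b t : ℝ} (ht : t ∈ Icc a b) :
    Fc g u a b t = F g u t := by
  unfold Fc
  rw [min_eq_right ht.2, max_eq_right ht.1]

lemma Fc_lip {g : ℝ} (hg : 0 ≤ g) {u : ℝ → ℝ} (hu : Continuous u) {a b : ℝ} (hab : a ≤ b) :
    ∃ K : ℝ≥0, ∀ t, LipschitzWith K (Fc g u a b t) := by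
  obtain ⟨M₀, hM₀⟩ := isCompact_Icc.exists_bound_of_continuousOn (hu.continuousOn (s := Icc a b))
  set M := max M₀ 0 with hM
  have hM0 : (0:ℝ) ≤ M := le_max_right _ _
  refine ⟨(max 1 (g + M)).toNNReal, fun t => ?_⟩
  apply F_lipschitz hg hM0
  have hmem : max a (min b t) ∈ Icc a b := by
    constructor
    · exact le_max_left _ _
    · exact max_le hab (min_le_left _ _)
  exact le_trans (by simpa using hM₀ _ hmem) (le_max_left _ _)

/-- Uniqueness of solutions on a closed interval whose interior contains the base point. -/
lemma sol_unique {g : ℝ} (hg : 0 ≤ g) {u : ℝ → ℝ} (hu : Continuous u) {a b t₀ : ℝ}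
    (ht₀ : t₀ ∈ Ioo a b) {f h : ℝ → ℝ × ℝ}
    (hf : ∀ t ∈ Icc a b, HasDerivWithinAt f (F g u t (f t)) (Icc a b) t)
    (hh : ∀ t ∈ Icc a b, HasDerivWithinAt h (F g u t (h t)) (Icc a b) t)
    (he : f t₀ = h t₀) : EqOn f h (Icc a b) := by
  have hab : a ≤ b := le_of_lt (lt_trans ht₀.1 ht₀.2)
  obtain ⟨K, hK⟩ := Fc_lip hg hu hab
  have hfc : ContinuousOn f (Icc a b) := fun t ht => (hf t ht).continuousWithinAt
  have hhc : ContinuousOn h (Icc a b) := fun t ht => (hh t ht).continuousWithinAt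
  have hda : ∀ (p : ℝ → ℝ × ℝ),
      (∀ t ∈ Icc a b, HasDerivWithinAt p (F g u t (p t)) (Icc a b) t) →
      ∀ t ∈ Ioo a b, HasDerivAt p (Fc g u a b t (p t)) t := by
    intro p hp t ht
    rw [Fc_eq (Ioo_subset_Icc_self ht)]
    exact (hp t (Ioo_subset_Icc_self ht)).hasDerivAt (Icc_mem_nhds ht.1 ht.2)
  exact ODE_solution_unique_of_mem_Icc (v := Fc g u a b) (s := fun _ => univ)
    (fun t _ => (hK t).lipschitzOnWith) ht₀ hfc (hda f hf) (fun _ _ => trivial)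
    hhc (hda h hh) (fun _ _ => trivial) he

lemma glue_piece {g : ℝ} {u : ℝ → ℝ} {S : Set ℝ} (hS : IsClosed S) {p h : ℝ → ℝ × ℝ}
    (hE : EqOn h p S) (hp : ∀ s ∈ S, HasDerivWithinAt p (F g u s (p s)) S s) :
    ∀ t : ℝ, HasDerivWithinAt h (F g u t (h t)) S t := by
  intro t
  by_cases ht : t ∈ S
  · have h1 := (hp t ht).congr (fun s hs => hE hs) (hE ht)
    rwa [hE ht]
  · exact HasFDerivWithinAt.of_notMem_closure (by rwa [hS.closure_eq])

/-- Solutions on arbitrarily long symmetric intervals. -/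
lemma sol_Icc {g : ℝ} (hg : 0 ≤ g) {u : ℝ → ℝ} (hu : Continuous u) (x₀ : ℝ × ℝ) (k : ℕ) :
    ∃ f : ℝ → ℝ × ℝ, f 0 = x₀ ∧
      ∀ t ∈ Icc (-(((k:ℝ)+1)/4)) (((k:ℝ)+1)/4),
        HasDerivWithinAt f (F g u t (f t)) (Icc (-(((k:ℝ)+1)/4)) (((k:ℝ)+1)/4)) t := by
  induction k with
  | zero =>
    obtain ⟨f, hf0, hf⟩ := pl_step hg hu (a := -(1/4 : ℝ)) (b := (1/4 : ℝ)) (t₀ := 0)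
      (by constructor <;> norm_num) (by norm_num) x₀
    exact ⟨f, hf0, by norm_num at hf ⊢; exact hf⟩
  | succ k ih =>
    obtain ⟨f, hf0, hf⟩ := ih
    set r : ℝ := ((k:ℝ)+1)/4 with hr
    have hr0 : 0 ≤ r := by positivity
    obtain ⟨fp, hfp0, hfp⟩ := pl_step hg hu (a := r) (b := r + 1/4) (t₀ := r)
      (by constructor <;> [exact le_refl r; linarith]) (by linarith) (f r)
    obtain ⟨fm, hfm0, hfm⟩ := pl_step hg hu (a := -r - 1/4) (b := -r) (t₀ := -r)
      (by constructor <;> [linarith; exact le_refl (-r)]) (by linarith) (f (-r))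
    set h : ℝ → ℝ × ℝ := fun t => if t < -r then fm t else if t ≤ r then f t else fp t with hh
    have E1 : EqOn h fm (Icc (-r - 1/4) (-r)) := by
      intro t ht
      rcases lt_or_eq_of_le ht.2 with h1 | h1
      · simp only [hh, if_pos h1]
      · simp only [hh, h1, lt_irrefl, if_false, if_neg (lt_irrefl (-r)),
          if_pos (by linarith : -r ≤ r)]
        exact hfm0.symm
    have E2 : EqOn h f (Icc (-r) r) := by
      intro t ht
      simp only [hh, if_neg (not_lt.2 ht.1), if_pos ht.2]
    have E3 : EqOn h fp (Icc r (r + 1/4)) := by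
      intro t ht
      rcases lt_or_eq_of_le ht.1 with h1 | h1
      · simp only [hh, if_neg (not_lt.2 (by linarith : -r ≤ t)), if_neg (not_le.2 h1)]
      · simp only [hh, ← h1, if_neg (not_lt.2 (by linarith : -r ≤ r)), if_pos (le_refl r)]
        exact hfp0.symm
    have hU : Icc (-(((k:ℝ)+1+1))/4) (((k:ℝ)+1+1)/4)
        = (Icc (-r - 1/4) (-r) ∪ Icc (-r) r) ∪ Icc r (r + 1/4) := by
      rw [Icc_union_Icc_eq_Icc (by linarith) (by linarith),
        Icc_union_Icc_eq_Icc (by linarith) (by linarith)]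
      rw [hr]
      congr 1 <;> ring
    refine ⟨h, ?_, ?_⟩
    · rw [E2 ⟨by linarith, by linarith⟩, hf0]
    · have hsub : ∀ t, HasDerivWithinAt h (F g u t (h t))
          ((Icc (-r - 1/4) (-r) ∪ Icc (-r) r) ∪ Icc r (r + 1/4)) t := by
        intro t
        refine HasDerivWithinAt.union (HasDerivWithinAt.union ?_ ?_) ?_
        · exact glue_piece isClosed_Icc E1 hfm t
        · exact glue_piece isClosed_Icc E2 (by simpa [hr] using hf) t
        · exact glue_piece isClosed_Icc E3 hfp t
      intro t ht
      have := hsub t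
      rw [← hU] at this
      convert this using 2 <;> push_cast <;> ring

/-- Global existence of solutions of the pendulum system. -/
lemma sol_global {g : ℝ} (hg : 0 ≤ g) {u : ℝ → ℝ} (hu : Continuous u) (x₀ : ℝ × ℝ) :
    ∃ f : ℝ → ℝ × ℝ, f 0 = x₀ ∧ ∀ t, HasDerivAt f (F g u t (f t)) t := by
  choose sol hsol0 hsol using sol_Icc hg hu x₀
  have hmem : ∀ (k : ℕ) (t : ℝ), |t| ≤ ((k:ℝ)+1)/4 → t ∈ Icc (-(((k:ℝ)+1)/4)) (((k:ℝ)+1)/4) :=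
    fun k t ht => abs_le.1 ht
  set N : ℝ → ℕ := fun t => 4 * ⌈|t|⌉₊ + 4 with hN
  have hNt : ∀ t : ℝ, |t| ≤ ((N t : ℝ)+1)/4 := by
    intro t
    have h1 : |t| ≤ (⌈|t|⌉₊ : ℝ) := Nat.le_ceil _
    have h2 : ((N t : ℝ)) = 4*(⌈|t|⌉₊:ℝ) + 4 := by rw [hN]; push_cast; ring
    nlinarith [Nat.cast_nonneg (α := ℝ) ⌈|t|⌉₊]
  set f : ℝ → ℝ × ℝ := fun t => sol (N t) t with hfdef
  have key : ∀ (k : ℕ) (t : ℝ), t ∈ Icc (-(((k:ℝ)+1)/4)) (((k:ℝ)+1)/4) → f t = sol k t := by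
    intro k t ht
    set j := min k (N t) with hj
    have hjk : (((j:ℝ)+1)/4) ≤ (((k:ℝ)+1)/4) := by
      have : (j:ℝ) ≤ k := Nat.cast_le.2 (min_le_left _ _); linarith
    have hjN : (((j:ℝ)+1)/4) ≤ (((N t:ℝ))+1)/4 := by
      have : (j:ℝ) ≤ N t := Nat.cast_le.2 (min_le_right _ _); linarith
    have htj : t ∈ Icc (-(((j:ℝ)+1)/4)) (((j:ℝ)+1)/4) := by
      apply hmem
      rcases le_total k (N t) with h1 | h1
      · rw [hj, min_eq_left h1]; exact abs_le.2 ht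
      · rw [hj, min_eq_right h1]; exact hNt t
    have hIsub_k : Icc (-(((j:ℝ)+1)/4)) (((j:ℝ)+1)/4) ⊆ Icc (-(((k:ℝ)+1)/4)) (((k:ℝ)+1)/4) :=
      Icc_subset_Icc (by linarith) hjk
    have hIsub_N : Icc (-(((j:ℝ)+1)/4)) (((j:ℝ)+1)/4)
        ⊆ Icc (-(((N t:ℝ)+1)/4)) (((N t:ℝ)+1)/4) := Icc_subset_Icc (by linarith) hjN
    have h0j : (0:ℝ) ∈ Ioo (-(((j:ℝ)+1)/4)) (((j:ℝ)+1)/4) := by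
      constructor
      · have : (0:ℝ) ≤ (j:ℝ) := Nat.cast_nonneg j
        linarith
      · have : (0:ℝ) ≤ (j:ℝ) := Nat.cast_nonneg j
        linarith
    have hu1 : EqOn (sol (N t)) (sol j) (Icc (-(((j:ℝ)+1)/4)) (((j:ℝ)+1)/4)) := by
      apply sol_unique hg hu h0j
      · exact fun s hs => ((hsol (N t)) s (hIsub_N hs)).mono hIsub_N
      · exact fun s hs => ((hsol j) s hs)
      · rw [hsol0, hsol0]
    have hu2 : EqOn (sol k) (sol j) (Icc (-(((j:ℝ)+1)/4)) (((j:ℝ)+1)/4)) := by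
      apply sol_unique hg hu h0j
      · exact fun s hs => ((hsol k) s (hIsub_k hs)).mono hIsub_k
      · exact fun s hs => ((hsol j) s hs)
      · rw [hsol0, hsol0]
    rw [hfdef]
    simp only
    rw [hu1 htj, hu2 htj]
  refine ⟨f, ?_, ?_⟩
  · rw [key 0 0 (by norm_num), hsol0]
  · intro t
    set k := N t + 1 with hk
    have hlt : |t| < ((k:ℝ)+1)/4 := by
      have := hNt t
      have h2 : ((N t : ℝ)+1)/4 < ((k:ℝ)+1)/4 := by
        rw [hk]; push_cast; linarith
      linarith
    have hmemk : t ∈ Icc (-(((k:ℝ)+1)/4)) (((k:ℝ)+1)/4) := hmem k t hlt.le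
    have hIoo : t ∈ Ioo (-(((k:ℝ)+1)/4)) (((k:ℝ)+1)/4) := by
      rcases abs_lt.1 hlt with ⟨h1, h2⟩; exact ⟨h1, h2⟩
    have hDk : HasDerivAt (sol k) (F g u t (sol k t)) t :=
      ((hsol k) t hmemk).hasDerivAt (Icc_mem_nhds hIoo.1 hIoo.2)
    have hev : f =ᶠ[nhds t] sol k := by
      filter_upwards [Ioo_mem_nhds hIoo.1 hIoo.2] with s hs
      exact key k s (Ioo_subset_Icc_self hs)
    have h2 := hDk.congr_of_eventuallyEq hev
    rw [show (F g u t (f t)) = (F g u t (sol k t)) by rw [key k t hmemk]]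
    exact h2

/-- Existence of a scalar pendulum solution with prescribed initial data. -/
lemma pend_exists {g : ℝ} (hg : 0 ≤ g) {u : ℝ → ℝ} (hu : Continuous u) (φ : ℝ) :
    ∃ p : ℝ → ℝ × ℝ, p 0 = (φ, 0) ∧ ∀ t, HasDerivAt p (F g u t (p t)) t :=
  sol_global hg hu (φ, 0)

lemma fst_deriv {g : ℝ} {u : ℝ → ℝ} {p : ℝ → ℝ × ℝ}
    (hp : ∀ t, HasDerivAt p (F g u t (p t)) t) (t : ℝ) :
    HasDerivAt (fun s => (p s).1) ((p t).2) t := by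
  have h := (ContinuousLinearMap.fst ℝ ℝ ℝ).hasFDerivAt.comp_hasDerivAt t (hp t)
  exact h

lemma snd_deriv {g : ℝ} {u : ℝ → ℝ} {p : ℝ → ℝ × ℝ}
    (hp : ∀ t, HasDerivAt p (F g u t (p t)) t) (t : ℝ) :
    HasDerivAt (fun s => (p s).2)
      (-g * Real.cos ((p t).1) + u t * Real.sin ((p t).1)) t := by
  have h := (ContinuousLinearMap.snd ℝ ℝ ℝ).hasFDerivAt.comp_hasDerivAt t (hp t)
  exact h

lemma cont_fst {g : ℝ} {u : ℝ → ℝ} {p : ℝ → ℝ × ℝ}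
    (hp : ∀ t, HasDerivAt p (F g u t (p t)) t) :
    Continuous (fun s => (p s).1) :=
  continuous_iff_continuousAt.2 fun t => (fst_deriv hp t).differentiableAt.continuousAt

/-- Grönwall-type continuous dependence. -/
lemma flow_dist {g : ℝ} (hg : 0 ≤ g) {u : ℝ → ℝ} (hu : Continuous u) {T : ℝ} (hT : 0 ≤ T) :
    ∃ c : ℝ, 1 ≤ c ∧ ∀ f h : ℝ → ℝ × ℝ,
      (∀ t, HasDerivAt f (F g u t (f t)) t) → (∀ t, HasDerivAt h (F g u t (h t)) t) →
      ∀ t ∈ Icc 0 T, dist (f t) (h t) ≤ c * dist (f 0) (h 0) := by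
  obtain ⟨K, hK⟩ := Fc_lip hg hu hT
  refine ⟨Real.exp (K * T), Real.one_le_exp (by positivity), ?_⟩
  intro f h hf hh t ht
  have hb := dist_le_of_trajectories_ODE (v := Fc g u 0 T) (a := 0) (b := T)
    (δ := dist (f 0) (h 0)) hK
    (fun s hs => (hf s).continuousAt.continuousWithinAt)
    (fun s hs => by
      rw [Fc_eq (Ico_subset_Icc_self hs)]; exact (hf s).hasDerivWithinAt)
    (fun s hs => (hh s).continuousAt.continuousWithinAt)
    (fun s hs => by
      rw [Fc_eq (Ico_subset_Icc_self hs)]; exact (hh s).hasDerivWithinAt)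
    le_rfl t ht
  calc dist (f t) (h t) ≤ dist (f 0) (h 0) * Real.exp (K * (t - 0)) := hb
    _ ≤ dist (f 0) (h 0) * Real.exp (K * T) := by
        apply mul_le_mul_of_nonneg_left _ dist_nonneg
        apply Real.exp_le_exp.2
        have : (0:ℝ) ≤ (K:ℝ) := K.2
        nlinarith [ht.1, ht.2]
    _ = Real.exp (K * T) * dist (f 0) (h 0) := by ring

/-- The safe height below which the pendulum accelerates downward. -/
def dstar (g M : ℝ) : ℝ := min 1 (g / (2*(M+1)))

lemma dstar_pos {g M : ℝ} (hg : 0 < g) (hM : 0 ≤ M) : 0 < dstar g M := by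
  apply lt_min one_pos; positivity

lemma dstar_le_one {g M : ℝ} : dstar g M ≤ 1 := min_le_left _ _

/-- In the low region the solution decays quadratically. -/
lemma decay {g M T ρ : ℝ} (hg : 0 < g) (hM : 0 ≤ M) {v x xd : ℝ → ℝ}
    (hx : ∀ t, HasDerivAt x (xd t) t)
    (hxd : ∀ t, HasDerivAt xd (-g * Real.cos (x t) + v t * Real.sin (x t)) t)
    (hvM : ∀ t ∈ Icc 0 T, |v t| ≤ M) (hρ : 0 ≤ ρ) (hρT : ρ ≤ T) (hxd0 : xd 0 = 0)
    (hin : ∀ t ∈ Ico 0 ρ, 0 < x t ∧ x t ≤ dstar g M) :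
    x ρ ≤ x 0 - (g / (2*(M+1))) * ρ^2 / 2 := by
  set κ : ℝ := g / (2*(M+1)) with hκ
  have hκ0 : 0 < κ := by positivity
  have hsec : ∀ t ∈ Ioo 0 ρ, -g * Real.cos (x t) + v t * Real.sin (x t) ≤ -κ := by
    intro t ht
    have htIco : t ∈ Ico 0 ρ := ⟨ht.1.le, ht.2⟩
    obtain ⟨hx1, hx2⟩ := hin t htIco
    have hxle1 : x t ≤ 1 := le_trans hx2 dstar_le_one
    have hcos : 1 - x t / 2 ≤ Real.cos (x t) := by
      have h1 := Real.one_sub_sq_div_two_le_cos (x := x t)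
      nlinarith
    have hsin0 : 0 ≤ Real.sin (x t) :=
      Real.sin_nonneg_of_nonneg_of_le_pi hx1.le (le_trans hxle1 (by linarith [Real.pi_gt_three]))
    have hsinle : Real.sin (x t) ≤ x t := Real.sin_le hx1.le
    have hvt : |v t| ≤ M := hvM t ⟨htIco.1, le_trans htIco.2.le hρT⟩
    have h2 : v t * Real.sin (x t) ≤ M * x t := by
      calc v t * Real.sin (x t) ≤ |v t| * Real.sin (x t) := by
            apply mul_le_mul_of_nonneg_right (le_abs_self _) hsin0
        _ ≤ M * x t := mul_le_mul hvt hsinle hsin0 hM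
    have h3 : x t ≤ g / (2*(M+1)) := le_trans hx2 (min_le_right _ _)
    have hcos2 : (1:ℝ)/2 ≤ Real.cos (x t) := by nlinarith
    have h4 : -g * Real.cos (x t) ≤ -(g/2) := by nlinarith
    have h5 : M * x t ≤ M * (g / (2*(M+1))) := by nlinarith
    have hM1 : (0:ℝ) < M + 1 := by linarith
    have heq : M * (g / (2*(M+1))) + g / (2*(M+1)) = g/2 := by
      field_simp
    rw [hκ]
    linarith
  have aux1 : AntitoneOn (fun t => xd t + κ * t) (Icc 0 ρ) := by
    apply antitoneOn_of_deriv_nonpos (convex_Icc 0 ρ)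
    · exact Continuous.continuousOn (by
        have : Continuous xd := continuous_iff_continuousAt.2
          fun t => (hxd t).differentiableAt.continuousAt
        fun_prop)
    · intro t ht
      exact ((hxd t).add ((hasDerivAt_id t).const_mul κ)).differentiableAt.differentiableWithinAt
    · intro t ht
      rw [interior_Icc] at ht
      have hd : deriv (fun s => xd s + κ * s) t
          = -g * Real.cos (x t) + v t * Real.sin (x t) + κ * 1 := by
        apply HasDerivAt.deriv
        exact (hxd t).add (((hasDerivAt_id t).const_mul κ))
      rw [hd]
      have := hsec t ht
      linarith
  have hxd_le : ∀ t ∈ Icc 0 ρ, xd t ≤ -κ * t := by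
    intro t ht
    have := aux1 (left_mem_Icc.2 hρ) ht ht.1
    simp only [mul_zero, add_zero, hxd0] at this
    linarith
  have aux2 : AntitoneOn (fun t => x t + κ * t^2 / 2) (Icc 0 ρ) := by
    apply antitoneOn_of_deriv_nonpos (convex_Icc 0 ρ)
    · exact Continuous.continuousOn (by
        have : Continuous x := continuous_iff_continuousAt.2
          fun t => (hx t).differentiableAt.continuousAt
        fun_prop)
    · intro t ht
      exact ((hx t).add
        (((hasDerivAt_pow 2 t).const_mul κ).div_const 2)).differentiableAt.differentiableWithinAt
    · intro t ht
      rw [interior_Icc] at ht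
      have h2 := ((hasDerivAt_pow 2 t).const_mul κ).div_const 2
      have hd := ((hx t).add h2).deriv
      rw [show (fun t => x t + κ * t ^ 2 / 2) = (x + fun x => κ * x ^ 2 / 2) from rfl, hd]
      have h7 := hxd_le t (Ioo_subset_Icc_self ht)
      have ht1 := ht.1
      norm_num
      nlinarith
  have := aux2 (left_mem_Icc.2 hρ) (right_mem_Icc.2 hρ) hρ
  simp only at this
  nlinarith

/-- Starting low enough at rest, the solution reaches `0` within time `T`,
staying below `dstar` throughout. -/
lemma hits_zero {g M T : ℝ} (hg : 0 < g) (hM : 0 ≤ M) (hT : 0 < T) {v x xd : ℝ → ℝ}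
    (hx : ∀ t, HasDerivAt x (xd t) t)
    (hxd : ∀ t, HasDerivAt xd (-g * Real.cos (x t) + v t * Real.sin (x t)) t)
    (hvM : ∀ t ∈ Icc 0 T, |v t| ≤ M) (hxd0 : xd 0 = 0) (h0 : 0 < x 0)
    (hsmall : x 0 ≤ min (dstar g M / 2) (g / (2*(M+1)) * T^2 / 4)) :
    ∃ t0 ∈ Icc 0 T, x t0 = 0 ∧ ∀ s ∈ Icc 0 t0, x s ≤ dstar g M := by
  have hxc : Continuous x := continuous_iff_continuousAt.2
    fun t => (hx t).differentiableAt.continuousAt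
  set κ : ℝ := g / (2*(M+1)) with hκ
  have hκ0 : 0 < κ := by positivity
  have hsm1 : x 0 ≤ dstar g M / 2 := le_trans hsmall (min_le_left _ _)
  have hsm2 : x 0 ≤ κ * T^2 / 4 := le_trans hsmall (min_le_right _ _)
  -- Step A: as long as x stays positive, it stays below dstar
  have stepA : ∀ ρ, 0 ≤ ρ → ρ ≤ T → (∀ t ∈ Ico 0 ρ, 0 < x t) →
      ∀ t ∈ Icc 0 ρ, x t ≤ dstar g M := by
    intro ρ hρ0 hρT hpos
    by_contra hcon
    push_neg at hcon
    obtain ⟨t₁, ht₁, ht₁'⟩ := hcon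
    set B : Set ℝ := {t ∈ Icc 0 ρ | dstar g M < x t} with hB
    have hBne : B.Nonempty := ⟨t₁, ht₁, ht₁'⟩
    have hBbdd : BddBelow B := ⟨0, fun t ht => ht.1.1⟩
    set ρ' := sInf B with hρ'
    have hρ'cl : ρ' ∈ closure B := csInf_mem_closure hBne hBbdd
    have hsub1 : closure B ⊆ Icc 0 ρ := closure_minimal (fun t ht => ht.1) isClosed_Icc
    have hρ'I : ρ' ∈ Icc 0 ρ := hsub1 hρ'cl
    have hρ'x : dstar g M ≤ x ρ' := by
      have hsub2 : closure B ⊆ {t | dstar g M ≤ x t} :=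
        closure_minimal (fun t ht => le_of_lt ht.2)
          (isClosed_le continuous_const hxc)
      exact hsub2 hρ'cl
    have hlow : ∀ t ∈ Ico 0 ρ', 0 < x t ∧ x t ≤ dstar g M := by
      intro t ht
      refine ⟨hpos t ⟨ht.1, lt_of_lt_of_le ht.2 hρ'I.2⟩, ?_⟩
      by_contra hc
      push_neg at hc
      have : t ∈ B := ⟨⟨ht.1, le_trans ht.2.le hρ'I.2⟩, hc⟩
      exact absurd (csInf_le hBbdd this) (not_le.2 ht.2)
    have hdec := decay hg hM hx hxd hvM hρ'I.1 (le_trans hρ'I.2 hρT) hxd0 hlow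
    have hd0 : 0 < dstar g M := dstar_pos hg hM
    have : x ρ' ≤ x 0 := by nlinarith [sq_nonneg ρ', hρ'I.1]
    linarith
  -- Step B: x must reach 0 within [0,T]
  have stepB : ∃ t₁ ∈ Icc 0 T, x t₁ ≤ 0 := by
    by_contra hcon
    push_neg at hcon
    have hpos : ∀ t ∈ Ico 0 T, 0 < x t := fun t ht => hcon t (Ico_subset_Icc_self ht)
    have hlow : ∀ t ∈ Ico 0 T, 0 < x t ∧ x t ≤ dstar g M := by
      intro t ht
      exact ⟨hpos t ht, stepA T (le_of_lt hT) le_rfl hpos t (Ico_subset_Icc_self ht)⟩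
    have hdec := decay hg hM hx hxd hvM (le_of_lt hT) le_rfl hxd0 hlow
    have : x T ≤ κ * T^2 / 4 - κ * T^2 / 2 := by rw [hκ] at *; linarith
    have hTpos : 0 < κ * T^2 := by positivity
    have hxT : x T ≤ 0 := by linarith
    exact absurd hxT (not_le.2 (hcon T (right_mem_Icc.2 hT.le)))
  -- Step C: the first hitting time
  obtain ⟨t₁, ht₁, ht₁'⟩ := stepB
  set Z : Set ℝ := {t ∈ Icc 0 T | x t ≤ 0} with hZ
  have hZcl : IsClosed Z := IsClosed.inter isClosed_Icc (isClosed_le hxc continuous_const)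
  have hZne : Z.Nonempty := ⟨t₁, ht₁, ht₁'⟩
  have hZbdd : BddBelow Z := ⟨0, fun t ht => ht.1.1⟩
  set t0 := sInf Z with ht0
  have ht0Z : t0 ∈ Z := hZcl.csInf_mem hZne hZbdd
  have ht0I : t0 ∈ Icc 0 T := ht0Z.1
  have hpos : ∀ t ∈ Ico 0 t0, 0 < x t := by
    intro t ht
    by_contra hc
    push_neg at hc
    have : t ∈ Z := ⟨⟨ht.1, le_trans ht.2.le ht0I.2⟩, hc⟩
    exact absurd (csInf_le hZbdd this) (not_le.2 ht.2)
  have ht0pos : 0 < t0 := by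
    rcases lt_or_eq_of_le ht0I.1 with h | h
    · exact h
    · exfalso; rw [← h] at ht0Z; linarith [ht0Z.2]
  have hx0' : x t0 = 0 := by
    refine le_antisymm ht0Z.2 ?_
    have h1 : t0 ∈ closure (Ico 0 t0) := by
      rw [closure_Ico (ne_of_lt ht0pos)]
      exact ⟨ht0I.1, le_rfl⟩
    have h2 : closure (Ico 0 t0) ⊆ {t | 0 ≤ x t} :=
      closure_minimal (fun t ht => (hpos t ht).le)
        (isClosed_le continuous_const hxc)
    exact h2 h1
  exact ⟨t0, ht0I, hx0', stepA t0 ht0I.1 ht0I.2 hpos⟩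

/-- If the solution is positive before `σ` and vanishes at `σ`, its velocity there
is nonpositive. -/
lemma left_deriv_nonpos {x xd : ℝ → ℝ} (hx : ∀ t, HasDerivAt x (xd t) t) {σ : ℝ}
    (hσ : 0 < σ) (hpos : ∀ t ∈ Ico 0 σ, 0 < x t) (hx0 : x σ = 0) : xd σ ≤ 0 := by
  have hsl : Filter.Tendsto (slope x σ) (nhdsWithin σ {σ}ᶜ) (nhds (xd σ)) :=
    hasDerivAt_iff_tendsto_slope.1 (hx σ)
  have hle : Filter.Tendsto (slope x σ) (nhdsWithin σ (Iio σ)) (nhds (xd σ)) :=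
    hsl.mono_left (nhdsWithin_mono σ (fun t ht => ne_of_lt ht))
  apply le_of_tendsto hle
  filter_upwards [Ioo_mem_nhdsLT hσ] with t ht
  have h1 : 0 < x t := hpos t ⟨ht.1.le, ht.2⟩
  rw [slope_def_field]
  have h2 : t - σ < 0 := by linarith [ht.2]
  rw [div_nonpos_iff]
  left
  constructor <;> [skip; linarith]
  rw [hx0]
  linarith

/-- Transversality: if the solution vanishes with nonpositive velocity, it goes strictly
negative immediately afterwards. -/
lemma goes_neg {g : ℝ} (hg : 0 < g) {v x xd : ℝ → ℝ}
    (hx : ∀ t, HasDerivAt x (xd t) t)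
    (hxd : ∀ t, HasDerivAt xd (-g * Real.cos (x t) + v t * Real.sin (x t)) t)
    {σ : ℝ} (hx0 : x σ = 0) (hxd0 : xd σ ≤ 0) :
    ∀ η > (0:ℝ), ∃ t₂ ∈ Ioo σ (σ + η), x t₂ < 0 := by
  intro η hη
  have hxc : Continuous x := continuous_iff_continuousAt.2
    fun t => (hx t).differentiableAt.continuousAt
  rcases lt_or_eq_of_le hxd0 with hneg | hzero
  · -- velocity strictly negative
    have hsl : Filter.Tendsto (slope x σ) (nhdsWithin σ (Ioi σ)) (nhds (xd σ)) :=
      (hasDerivAt_iff_tendsto_slope.1 (hx σ)).mono_left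
        (nhdsWithin_mono σ (fun t ht => ne_of_gt ht))
    have hev : ∀ᶠ t in nhdsWithin σ (Ioi σ), slope x σ t < 0 :=
      hsl.eventually (eventually_lt_nhds hneg)
    obtain ⟨t₂, ht₂, ht₂'⟩ := (hev.and
      (Filter.eventually_mem_set.2 (Ioo_mem_nhdsGT
        (show σ < σ + η by linarith)))).exists
    refine ⟨t₂, ht₂', ?_⟩
    rw [slope_def_field, hx0, sub_zero] at ht₂
    have h2 : 0 < t₂ - σ := by linarith [ht₂'.1]
    rcases div_neg_iff.1 ht₂ with ⟨_, h3⟩ | ⟨h3, _⟩ <;> linarith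
  · -- zero velocity: use the second derivative
    have hdd : HasDerivAt xd (-g) σ := by
      have := hxd σ
      rw [hx0] at this
      simpa using this
    have hsl : Filter.Tendsto (slope xd σ) (nhdsWithin σ (Ioi σ)) (nhds (-g)) :=
      (hasDerivAt_iff_tendsto_slope.1 hdd).mono_left
        (nhdsWithin_mono σ (fun t ht => ne_of_gt ht))
    have hev : ∀ᶠ t in nhdsWithin σ (Ioi σ), slope xd σ t < 0 :=
      hsl.eventually (eventually_lt_nhds (by linarith))
    obtain ⟨s₀, hs₀, hsub⟩ := mem_nhdsGT_iff_exists_Ioo_subset.1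
      (hev.and (Filter.eventually_mem_set.2 (Ioo_mem_nhdsGT
        (by linarith : σ < σ + η))))
    set ρ : ℝ := min s₀ (σ + η) with hρdef
    have hσρ : σ < ρ := lt_min hs₀ (by linarith)
    have hxdneg : ∀ t ∈ Ioo σ ρ, xd t < 0 := by
      intro t ht
      have h1 := (hsub ⟨ht.1, lt_of_lt_of_le ht.2 (min_le_left _ _)⟩).1
      rw [slope_def_field, ← hzero] at h1
      have h2 : 0 < t - σ := by linarith [ht.1]
      rw [hzero, sub_zero] at h1
      rcases div_neg_iff.1 h1 with ⟨_, h3⟩ | ⟨h3, _⟩ <;> linarith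
    have hanti : StrictAntiOn x (Icc σ ρ) := by
      apply strictAntiOn_of_deriv_neg (convex_Icc σ ρ) (hxc.continuousOn)
      intro t ht
      rw [interior_Icc] at ht
      rw [(hx t).deriv]
      exact hxdneg t ht
    set t₂ : ℝ := (σ + ρ)/2 with ht₂def
    have ht₂mem : t₂ ∈ Ioo σ ρ := ⟨by linarith, by linarith⟩
    refine ⟨t₂, ⟨ht₂mem.1, lt_of_lt_of_le ht₂mem.2 (min_le_right _ _)⟩, ?_⟩
    have := hanti (left_mem_Icc.2 hσρ.le) (Ioo_subset_Icc_self ht₂mem) ht₂mem.1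
    rwa [hx0] at this

/-! ### First boundary-hitting time -/

/-- Times in `[0,T]` at which `x` touches the floor positions, together with `T`. -/
def hitSet (T : ℝ) (x : ℝ → ℝ) : Set ℝ :=
  {t ∈ Icc 0 T | x t = 0 ∨ x t = π} ∪ {T}

noncomputable def sig (T : ℝ) (x : ℝ → ℝ) : ℝ := sInf (hitSet T x)

noncomputable def hval (T : ℝ) (x : ℝ → ℝ) : ℝ := x (sig T x)

lemma hitSet_bddBelow {T : ℝ} (hT : 0 ≤ T) (x : ℝ → ℝ) : BddBelow (hitSet T x) := by
  refine ⟨0, fun t ht => ?_⟩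
  rcases ht with ⟨h1, _⟩ | h1
  · exact h1.1
  · rw [mem_singleton_iff] at h1; rw [h1]; exact hT

lemma hitSet_closed {T : ℝ} (x : ℝ → ℝ) (hxc : Continuous x) : IsClosed (hitSet T x) := by
  apply IsClosed.union
  · have : {t ∈ Icc 0 T | x t = 0 ∨ x t = π}
        = Icc 0 T ∩ (x ⁻¹' {0} ∪ x ⁻¹' {π}) := by
      ext t; simp [mem_preimage]
    rw [this]
    exact isClosed_Icc.inter ((isClosed_singleton.preimage hxc).union
      (isClosed_singleton.preimage hxc))
  · exact isClosed_singleton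

lemma sig_spec {T : ℝ} (hT : 0 ≤ T) {x : ℝ → ℝ} (hxc : Continuous x) :
    sig T x ∈ hitSet T x ∧ sig T x ∈ Icc 0 T := by
  have hne : (hitSet T x).Nonempty := ⟨T, Or.inr rfl⟩
  have h1 : sig T x ∈ hitSet T x :=
    (hitSet_closed x hxc).csInf_mem hne (hitSet_bddBelow hT x)
  refine ⟨h1, ?_⟩
  rcases h1 with ⟨h2, _⟩ | h2
  · exact h2
  · rw [mem_singleton_iff] at h2; rw [h2]; exact right_mem_Icc.2 hT

lemma sig_le {T : ℝ} (hT : 0 ≤ T) {x : ℝ → ℝ} {t : ℝ} (ht : t ∈ hitSet T x) :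
    sig T x ≤ t := csInf_le (hitSet_bddBelow hT x) ht

/-- Before the first hitting time, the trajectory stays in `(0, π)`. -/
lemma before {T : ℝ} (hT : 0 ≤ T) {x : ℝ → ℝ} (hxc : Continuous x)
    (hx0 : x 0 ∈ Ioo 0 π) : ∀ t ∈ Ico 0 (sig T x), x t ∈ Ioo 0 π := by
  intro t ht
  have hsI : sig T x ∈ Icc 0 T := (sig_spec hT hxc).2
  have htI : t ∈ Icc 0 T := ⟨ht.1, le_trans ht.2.le hsI.2⟩
  have hne : ∀ s ∈ Icc 0 t, x s ≠ 0 ∧ x s ≠ π := by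
    intro s hs
    constructor <;> intro hc <;>
    · have hmem : s ∈ hitSet T x :=
        Or.inl ⟨⟨hs.1, le_trans hs.2 htI.2⟩, by tauto⟩
      have := sig_le hT hmem
      have h3 := lt_of_le_of_lt (le_trans this hs.2) ht.2
      exact absurd h3 (lt_irrefl _)
  constructor
  · by_contra hc
    push_neg at hc
    have hlt : x t < 0 := lt_of_le_of_ne hc (hne t ⟨ht.1, le_rfl⟩).1
    have : (0:ℝ) ∈ Icc (x t) (x 0) := ⟨hlt.le, hx0.1.le⟩
    obtain ⟨s, hs, hs'⟩ := intermediate_value_Icc' ht.1 hxc.continuousOn this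
    exact absurd hs' (hne s hs).1
  · by_contra hc
    push_neg at hc
    have hlt : π < x t := lt_of_le_of_ne hc (Ne.symm (hne t ⟨ht.1, le_rfl⟩).2)
    have : π ∈ Icc (x 0) (x t) := ⟨hx0.2.le, hlt.le⟩
    obtain ⟨s, hs, hs'⟩ := intermediate_value_Icc ht.1 hxc.continuousOn this
    exact absurd hs' (hne s hs).2

lemma trichotomy {T : ℝ} (hT : 0 ≤ T) {x : ℝ → ℝ} (hxc : Continuous x)
    (hx0 : x 0 ∈ Ioo 0 π) :
    hval T x = 0 ∨ hval T x = π ∨ (sig T x = T ∧ ∀ t ∈ Icc 0 T, x t ∈ Ioo 0 π) := by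
  obtain ⟨hmem, hI⟩ := sig_spec hT hxc
  rcases hmem with ⟨_, h2⟩ | h2
  · rcases h2 with h2 | h2
    · exact Or.inl h2
    · exact Or.inr (Or.inl h2)
  · rw [mem_singleton_iff] at h2
    by_cases hz : x T = 0 ∨ x T = π
    · rcases hz with hz | hz
      · exact Or.inl (by rw [hval, h2, hz])
      · exact Or.inr (Or.inl (by rw [hval, h2, hz]))
    · push_neg at hz
      refine Or.inr (Or.inr ⟨h2, fun t ht => ?_⟩)
      rcases lt_or_eq_of_le ht.2 with h3 | h3
      · exact before hT hxc hx0 t ⟨ht.1, by rw [h2]; exact h3⟩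
      · -- t = T; same IVT argument
        rw [h3]
        constructor
        · by_contra hc
          push_neg at hc
          have hlt : x T < 0 := lt_of_le_of_ne hc hz.1
          have h4 : (0:ℝ) ∈ Icc (x T) (x 0) := ⟨hlt.le, hx0.1.le⟩
          obtain ⟨s, hs, hs'⟩ := intermediate_value_Icc' hT hxc.continuousOn h4
          have hmem : s ∈ hitSet T x := Or.inl ⟨hs, Or.inl hs'⟩
          have h5 := sig_le hT hmem
          rw [h2] at h5
          have h6 : s = T := le_antisymm hs.2 h5
          rw [h6] at hs'
          exact hz.1 hs'
        · by_contra hc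
          push_neg at hc
          have hlt : π < x T := lt_of_le_of_ne hc (Ne.symm hz.2)
          have h4 : π ∈ Icc (x 0) (x T) := ⟨hx0.2.le, hlt.le⟩
          obtain ⟨s, hs, hs'⟩ := intermediate_value_Icc hT hxc.continuousOn h4
          have hmem : s ∈ hitSet T x := Or.inl ⟨hs, Or.inr hs'⟩
          have h5 := sig_le hT hmem
          rw [h2] at h5
          have h6 : s = T := le_antisymm hs.2 h5
          rw [h6] at hs'
          exact hz.2 hs'

lemma stays_sig {T : ℝ} (hT : 0 ≤ T) {x : ℝ → ℝ}
    (hin : ∀ t ∈ Icc 0 T, x t ∈ Ioo 0 π) : sig T x = T ∧ hval T x = x T := by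
  have h1 : hitSet T x = {T} := by
    apply Subset.antisymm
    · rintro t (⟨h2, h3⟩ | h2)
      · exfalso
        obtain ⟨h4, h5⟩ := hin t h2
        rcases h3 with h3 | h3 <;> [linarith; linarith]
      · exact h2
    · intro t ht; exact Or.inr ht
  have h2 : sig T x = T := by rw [sig, h1, csInf_singleton]
  exact ⟨h2, by rw [hval, h2]⟩

lemma hit_first {T : ℝ} (hT : 0 ≤ T) {x : ℝ → ℝ} (hxc : Continuous x) {t0 : ℝ}
    (ht0 : t0 ∈ Icc 0 T) (h0 : x t0 = 0) (hlt : ∀ s ∈ Icc 0 t0, x s < π) :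
    hval T x = 0 := by
  have hmem : t0 ∈ hitSet T x := Or.inl ⟨ht0, Or.inl h0⟩
  have h1 : sig T x ≤ t0 := sig_le hT hmem
  obtain ⟨hmem2, hI⟩ := sig_spec hT hxc
  have h2 : x (sig T x) < π := hlt _ ⟨hI.1, h1⟩
  rcases hmem2 with ⟨_, h3⟩ | h3
  · rcases h3 with h3 | h3
    · exact h3
    · exact absurd h3 (ne_of_lt h2)
  · rw [mem_singleton_iff] at h3
    have h4 : t0 = T := le_antisymm ht0.2 (h3 ▸ h1)
    rw [hval, h3, ← h4, h0]

lemma hval_reflect {T : ℝ} (x : ℝ → ℝ) :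
    hval T (fun t => π - x t) = π - hval T x := by
  have h1 : hitSet T (fun t => π - x t) = hitSet T x := by
    unfold hitSet
    ext t
    constructor <;> rintro (⟨h2, h3⟩ | h2)
    · refine Or.inl ⟨h2, ?_⟩
      rcases h3 with h3 | h3
      · have h4 : π - x t = 0 := h3
        right; linarith
      · have h4 : π - x t = π := h3
        left; linarith
    · exact Or.inr h2
    · refine Or.inl ⟨h2, ?_⟩
      rcases h3 with h3 | h3
      · right; show π - x t = π; rw [h3]; ring
      · left; show π - x t = 0; rw [h3]; ring
    · exact Or.inr h2
  rw [hval, hval, sig, sig, h1]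

lemma sig_pos {T : ℝ} (hT : 0 < T) {x : ℝ → ℝ} (hxc : Continuous x)
    (hx0 : x 0 ∈ Ioo 0 π) : 0 < sig T x := by
  obtain ⟨hmem, hI⟩ := sig_spec hT.le hxc
  rcases lt_or_eq_of_le hI.1 with h | h
  · exact h
  · exfalso
    rw [← h] at hmem
    rcases hmem with ⟨_, h2⟩ | h2
    · rcases h2 with h2 | h2 <;> [exact absurd h2 (ne_of_gt hx0.1);
        exact absurd h2 (ne_of_lt hx0.2)]
    · rw [mem_singleton_iff] at h2; linarith [h2 ▸ hT]

/-! ### Continuity of the exit value -/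

lemma cont_at_stays {T c : ℝ} (hT : 0 < T) (hc : 1 ≤ c) {X : ℝ → ℝ → ℝ}
    (hXc : ∀ φ, Continuous (X φ))
    (hdep : ∀ φ ψ : ℝ, ∀ t ∈ Icc 0 T, |X ψ t - X φ t| ≤ c * |ψ - φ|)
    {φ : ℝ} (hstay : ∀ t ∈ Icc 0 T, X φ t ∈ Ioo 0 π) {ε : ℝ} (hε : 0 < ε) :
    ∃ δ > 0, ∀ ψ, |ψ - φ| < δ → |hval T (X ψ) - hval T (X φ)| < ε := by
  have hc0 : 0 < c := lt_of_lt_of_le one_pos hc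
  obtain ⟨tm, htm, hmin⟩ := isCompact_Icc.exists_isMinOn
    (nonempty_Icc.2 hT.le) (hXc φ).continuousOn
  obtain ⟨tM, htM, hmax⟩ := isCompact_Icc.exists_isMaxOn
    (nonempty_Icc.2 hT.le) (hXc φ).continuousOn
  set m := X φ tm with hm
  set Mx := X φ tM with hMx
  have hm0 : 0 < m := (hstay tm htm).1
  have hMxπ : Mx < π := (hstay tM htM).2
  set e := min (min m (π - Mx)) ε with he
  have he0 : 0 < e := lt_min (lt_min hm0 (by linarith)) hε
  refine ⟨e / (2*c), by positivity, fun ψ hψ => ?_⟩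
  have key : ∀ t ∈ Icc 0 T, |X ψ t - X φ t| < e := by
    intro t ht
    have h1 := hdep φ ψ t ht
    have h2 : c * |ψ - φ| < c * (e / (2*c)) :=
      mul_lt_mul_of_pos_left hψ hc0
    have h3 : c * (e / (2*c)) = e/2 := by field_simp
    linarith
  have hstayψ : ∀ t ∈ Icc 0 T, X ψ t ∈ Ioo 0 π := by
    intro t ht
    obtain ⟨h1, h2⟩ := abs_lt.1 (key t ht)
    have h4 : m ≤ X φ t := hmin ht
    have h5 : X φ t ≤ Mx := hmax ht
    have h6 : e ≤ m := le_trans (min_le_left _ _) (min_le_left _ _)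
    have h7 : e ≤ π - Mx := le_trans (min_le_left _ _) (min_le_right _ _)
    constructor <;> nlinarith
  rw [(stays_sig hT.le hstayψ).2, (stays_sig hT.le hstay).2]
  have h8 := key T (right_mem_Icc.2 hT.le)
  have h9 : e ≤ ε := min_le_right _ _
  linarith [abs_lt.1 h8, abs_nonneg (X ψ T - X φ T), (abs_lt.1 h8).1]

lemma cont_at_zero {g T c : ℝ} (hg : 0 < g) (hT : 0 < T) (hc : 1 ≤ c) {v : ℝ → ℝ}
    {X XD : ℝ → ℝ → ℝ}
    (hXd : ∀ φ t, HasDerivAt (X φ) (XD φ t) t)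
    (hXdd : ∀ φ t, HasDerivAt (XD φ) (-g * Real.cos (X φ t) + v t * Real.sin (X φ t)) t)
    (hX0 : ∀ φ, X φ 0 = φ)
    (hdep : ∀ φ ψ : ℝ, ∀ t ∈ Icc 0 T, |X ψ t - X φ t| ≤ c * |ψ - φ|)
    {φ : ℝ} (hφ : φ ∈ Ioo 0 π) (h0 : hval T (X φ) = 0) {ε : ℝ} (hε : 0 < ε) :
    ∃ δ > 0, ∀ ψ, |ψ - φ| < δ → |hval T (X ψ) - hval T (X φ)| < ε := by
  have hc0 : 0 < c := lt_of_lt_of_le one_pos hc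
  have hXc : ∀ ψ, Continuous (X ψ) := fun ψ => continuous_iff_continuousAt.2
    fun t => (hXd ψ t).differentiableAt.continuousAt
  have hx0φ : X φ 0 ∈ Ioo 0 π := by rw [hX0 φ]; exact hφ
  set σ := sig T (X φ) with hσdef
  obtain ⟨hσmem, hσI⟩ := sig_spec hT.le (hXc φ)
  have hXσ : X φ σ = 0 := h0
  have hσpos : 0 < σ := sig_pos hT (hXc φ) hx0φ
  have hbef := before hT.le (hXc φ) hx0φ
  obtain ⟨tM, htM, hmax⟩ := isCompact_Icc.exists_isMaxOn
    (nonempty_Icc.2 hσI.1) (hXc φ).continuousOn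
  set Mx := X φ tM with hMxdef
  have hMxπ : Mx < π := by
    rcases lt_or_eq_of_le htM.2 with h1 | h1
    · exact (hbef tM ⟨htM.1, h1⟩).2
    · rw [hMxdef, h1, hXσ]; exact Real.pi_pos
  by_cases hσT : σ = T
  · -- first exit exactly at the final time
    set e := min (π - Mx) ε with he
    have he0 : 0 < e := lt_min (by linarith) hε
    refine ⟨min (e/(2*c)) (min φ (π - φ)), by
      apply lt_min (by positivity) (lt_min hφ.1 (by linarith [hφ.2])), fun ψ hψ => ?_⟩
    have hψ1 : |ψ - φ| < e/(2*c) := lt_of_lt_of_le hψ (min_le_left _ _)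
    have hψIoo : ψ ∈ Ioo 0 π := by
      have h2 := lt_of_lt_of_le hψ (min_le_right _ _)
      obtain ⟨h3, h4⟩ := abs_lt.1 h2
      have h5 := min_le_left φ (π - φ)
      have h6 := min_le_right φ (π - φ)
      constructor <;> nlinarith
    have key : ∀ t ∈ Icc 0 T, |X ψ t - X φ t| < e := by
      intro t ht
      have h1 := hdep φ ψ t ht
      have h2 : c * |ψ - φ| < c * (e / (2*c)) := mul_lt_mul_of_pos_left hψ1 hc0
      have h3 : c * (e / (2*c)) = e/2 := by field_simp
      linarith
    have hltπ : ∀ t ∈ Icc 0 T, X ψ t < π := by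
      intro t ht
      have h1 := (abs_lt.1 (key t ht)).2
      have h2 : X φ t ≤ Mx := hmax (by rw [show sig T (X φ) = T from hσT]; exact ht)
      have h3 : e ≤ π - Mx := min_le_left _ _
      linarith
    have hx0ψ : X ψ 0 ∈ Ioo 0 π := by rw [hX0 ψ]; exact hψIoo
    rcases trichotomy hT.le (hXc ψ) hx0ψ with hz | hπ | ⟨hsT, hstay⟩
    · rw [hz, h0]; simpa using hε
    · exfalso
      obtain ⟨hmem2, hI2⟩ := sig_spec hT.le (hXc ψ)
      have h7 : hval T (X ψ) < π := hltπ _ hI2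
      rw [hπ] at h7
      exact absurd h7 (lt_irrefl _)
    · rw [(stays_sig hT.le hstay).2, h0]
      have h8 := key T (right_mem_Icc.2 hT.le)
      have h9 : X φ T = 0 := by rw [← hσT]; exact hXσ
      rw [h9] at h8
      have h10 : e ≤ ε := min_le_right _ _
      simpa using lt_of_lt_of_le h8 h10
  · -- first exit strictly before the final time
    have hσltT : σ < T := lt_of_le_of_ne hσI.2 hσT
    have hvel : XD φ σ ≤ 0 :=
      left_deriv_nonpos (hXd φ) hσpos (fun t ht => (hbef t ht).1) hXσ
    obtain ⟨η₁, hη₁, hball⟩ := Metric.continuousAt_iff.1 (hXc φ).continuousAt 1 one_pos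
    obtain ⟨t₂, ht₂mem, ht₂neg⟩ := goes_neg hg (hXd φ) (hXdd φ) hXσ hvel
      (min η₁ (T - σ)) (lt_min hη₁ (by linarith))
    have ht₂T : t₂ ≤ T := by
      have := ht₂mem.2
      have h2 : σ + min η₁ (T - σ) ≤ σ + (T - σ) := by
        linarith [min_le_right η₁ (T - σ)]
      linarith
    have ht₂0 : 0 ≤ t₂ := le_trans hσI.1 ht₂mem.1.le
    set Mx2 := max Mx 1 with hMx2def
    have hMx2π : Mx2 < π := max_lt hMxπ (by linarith [pi_gt_three])
    have hbnd : ∀ s ∈ Icc 0 t₂, X φ s ≤ Mx2 := by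
      intro s hs
      rcases le_or_gt s σ with h1 | h1
      · exact le_trans (hmax ⟨hs.1, h1⟩) (le_max_left _ _)
      · have h2 : dist s σ < η₁ := by
          rw [Real.dist_eq, abs_of_pos (by linarith)]
          have := ht₂mem.2
          have h3 := min_le_left η₁ (T - σ)
          linarith [hs.2]
        have h4 := hball h2
        rw [Real.dist_eq, hXσ, sub_zero] at h4
        exact le_trans (le_of_lt (lt_of_abs_lt h4)) (le_max_right _ _)
    set e := min (π - Mx2) (-(X φ t₂)) with he
    have he0 : 0 < e := lt_min (by linarith) (by linarith)
    refine ⟨min (e/(2*c)) (min φ (π - φ)), by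
      apply lt_min (by positivity) (lt_min hφ.1 (by linarith [hφ.2])), fun ψ hψ => ?_⟩
    have hψ1 : |ψ - φ| < e/(2*c) := lt_of_lt_of_le hψ (min_le_left _ _)
    have hψIoo : ψ ∈ Ioo 0 π := by
      have h2 := lt_of_lt_of_le hψ (min_le_right _ _)
      obtain ⟨h3, h4⟩ := abs_lt.1 h2
      have h5 := min_le_left φ (π - φ)
      have h6 := min_le_right φ (π - φ)
      constructor <;> nlinarith
    have key : ∀ t ∈ Icc 0 T, |X ψ t - X φ t| < e := by
      intro t ht
      have h1 := hdep φ ψ t ht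
      have h2 : c * |ψ - φ| < c * (e / (2*c)) := mul_lt_mul_of_pos_left hψ1 hc0
      have h3 : c * (e / (2*c)) = e/2 := by field_simp
      linarith
    have hXψt₂ : X ψ t₂ < 0 := by
      have h1 := (abs_lt.1 (key t₂ ⟨ht₂0, ht₂T⟩)).2
      have h2 : e ≤ -(X φ t₂) := min_le_right _ _
      linarith
    have hψlt : ∀ s ∈ Icc 0 t₂, X ψ s < π := by
      intro s hs
      have h1 := (abs_lt.1 (key s ⟨hs.1, le_trans hs.2 ht₂T⟩)).2
      have h2 := hbnd s hs
      have h3 : e ≤ π - Mx2 := min_le_left _ _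
      linarith
    have hIVT : (0:ℝ) ∈ Icc (X ψ t₂) (X ψ 0) := by
      rw [hX0 ψ]
      exact ⟨hXψt₂.le, hψIoo.1.le⟩
    obtain ⟨s, hs, hs'⟩ := intermediate_value_Icc' ht₂0 (hXc ψ).continuousOn hIVT
    have hzero : hval T (X ψ) = 0 :=
      hit_first hT.le (hXc ψ) ⟨hs.1, le_trans hs.2 ht₂T⟩ hs'
        (fun r hr => hψlt r ⟨hr.1, le_trans hr.2 hs.2⟩)
    rw [hzero, h0]
    simpa using hε

end WPend

/-- Prescribed final position: for every `T > 0` and every `y ∈ (0, π)` there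
is an initial angle from which the rod, released at rest, stays strictly above
the floor during `[0, T]` and occupies exactly the position `y` at time `T`. -/
theorem whitney_prescribed_final_position (g : ℝ) (hg : 0 < g)
    (u : ℝ → ℝ) (hu : Continuous u) (T : ℝ) (hT : 0 < T)
    (y : ℝ) (hy : y ∈ Set.Ioo (0 : ℝ) Real.pi) :
    ∃ φ ∈ Set.Ioo (0 : ℝ) Real.pi, ∃ α : ℝ → ℝ,
      IsPendulumSolution g u α ∧ α 0 = φ ∧ deriv α 0 = 0 ∧
        (∀ t ∈ Set.Icc (0 : ℝ) T, α t ∈ Set.Ioo (0 : ℝ) Real.pi) ∧ α T = y := by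
  classical
  open Set Real WPend in
  -- the flow of the pendulum system
  choose P hP0 hPd using fun φ : ℝ => WPend.pend_exists (g := g) hg.le hu φ
  set X : ℝ → ℝ → ℝ := fun φ t => (P φ t).1 with hXdef
  set XD : ℝ → ℝ → ℝ := fun φ t => (P φ t).2 with hXDdef
  have hXd : ∀ φ t, HasDerivAt (X φ) (XD φ t) t := fun φ t => WPend.fst_deriv (hPd φ) t
  have hXdd : ∀ φ t, HasDerivAt (XD φ)
      (-g * Real.cos (X φ t) + u t * Real.sin (X φ t)) t :=
    fun φ t => WPend.snd_deriv (hPd φ) t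
  have hX0 : ∀ φ, X φ 0 = φ := fun φ => by rw [hXdef]; simp [hP0 φ]
  have hXD0 : ∀ φ, XD φ 0 = 0 := fun φ => by rw [hXDdef]; simp [hP0 φ]
  have hXc : ∀ φ, Continuous (X φ) := fun φ => WPend.cont_fst (hPd φ)
  -- continuous dependence
  obtain ⟨c, hc1, hdepP⟩ := WPend.flow_dist hg.le hu hT.le
  have hdep : ∀ φ ψ : ℝ, ∀ t ∈ Icc (0:ℝ) T, |X ψ t - X φ t| ≤ c * |ψ - φ| := by
    intro φ ψ t ht
    have h1 := hdepP (P ψ) (P φ) (hPd ψ) (hPd φ) t ht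
    have h2 : dist (P ψ 0) (P φ 0) = |ψ - φ| := by
      rw [hP0, hP0, Prod.dist_eq]
      simp [Real.dist_eq]
    have h3 : |X ψ t - X φ t| ≤ dist (P ψ t) (P φ t) := by
      rw [Prod.dist_eq]
      exact le_trans (le_of_eq (Real.dist_eq _ _).symm) (le_max_left _ _)
    rw [h2] at h1
    linarith
  -- a bound for the control on [0, T]
  obtain ⟨M₀, hM₀⟩ := isCompact_Icc.exists_bound_of_continuousOn
    (hu.continuousOn (s := Icc (0:ℝ) T))
  set M := max M₀ 0 with hMdef
  have hM0 : 0 ≤ M := le_max_right _ _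
  have hMb : ∀ t ∈ Icc (0:ℝ) T, |u t| ≤ M :=
    fun t ht => le_trans (by simpa using hM₀ t ht) (le_max_left _ _)
  have hMb' : ∀ t ∈ Icc (0:ℝ) T, |(fun s => -u s) t| ≤ M := by
    intro t ht; simpa [abs_neg] using hMb t ht
  -- endpoint values
  set ε₀ : ℝ := min (WPend.dstar g M / 2) (g / (2*(M+1)) * T^2 / 4) with hε₀def
  have hd0 : 0 < WPend.dstar g M := WPend.dstar_pos hg hM0
  have hε₀ : 0 < ε₀ := lt_min (by linarith) (by positivity)
  set φ₀ : ℝ := min ε₀ (π/2) / 2 with hφ₀def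
  have hφ₀pos : 0 < φ₀ := by
    have := Real.pi_pos
    apply div_pos (lt_min hε₀ (by linarith)) two_pos
  have hφ₀small : φ₀ ≤ ε₀ := by
    have h1 := min_le_left ε₀ (π/2)
    rw [hφ₀def]; linarith
  have hφ₀pi4 : φ₀ ≤ π/4 := by
    have h1 := min_le_right ε₀ (π/2)
    rw [hφ₀def]; linarith
  set φ₁ : ℝ := π - φ₀ with hφ₁def
  have hφ₀₁ : φ₀ < φ₁ := by
    have := Real.pi_gt_three
    rw [hφ₁def]; linarith
  have hφ₁pi : φ₁ < π := by rw [hφ₁def]; linarith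
  have hdgood : WPend.dstar g M < π := by
    have h1 : WPend.dstar g M ≤ 1 := WPend.dstar_le_one
    linarith [Real.pi_gt_three]
  -- the exit value at φ₀ is 0
  have hval₀ : WPend.hval T (X φ₀) = 0 := by
    obtain ⟨t0, ht0, hx0, hbd⟩ := WPend.hits_zero hg hM0 hT (hXd φ₀) (hXdd φ₀) hMb
      (hXD0 φ₀) (by rw [hX0]; exact hφ₀pos) (by rw [hX0]; exact le_trans hφ₀small le_rfl)
    exact WPend.hit_first hT.le (hXc φ₀) ht0 hx0
      (fun s hs => lt_of_le_of_lt (hbd s hs) hdgood)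
  -- the exit value at φ₁ is π
  have hval₁ : WPend.hval T (X φ₁) = π := by
    set Y : ℝ → ℝ := fun t => π - X φ₁ t with hYdef
    set YD : ℝ → ℝ := fun t => -XD φ₁ t with hYDdef
    have hYd : ∀ t, HasDerivAt Y (YD t) t := fun t => (hXd φ₁ t).const_sub π
    have hYdd : ∀ t, HasDerivAt YD
        (-g * Real.cos (Y t) + (fun s => -u s) t * Real.sin (Y t)) t := by
      intro t
      have h1 := (hXdd φ₁ t).neg
      convert h1 using 1
      show -g * Real.cos (π - X φ₁ t) + -u t * Real.sin (π - X φ₁ t) = _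
      rw [Real.cos_pi_sub, Real.sin_pi_sub]
      ring
      all_goals rfl
    have hY0 : Y 0 = φ₀ := by rw [hYdef]; simp [hX0, hφ₁def]
    obtain ⟨t0, ht0, hy0, hbd⟩ := WPend.hits_zero hg hM0 hT hYd hYdd hMb'
      (by rw [hYDdef]; simp [hXD0]) (by rw [hY0]; exact hφ₀pos)
      (by rw [hY0]; exact hφ₀small)
    have hYval : WPend.hval T Y = 0 :=
      WPend.hit_first hT.le (by rw [hYdef]; exact continuous_const.sub (hXc φ₁)) ht0 hy0
        (fun s hs => lt_of_le_of_lt (hbd s hs) hdgood)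
    have h2 := WPend.hval_reflect (T := T) (X φ₁)
    rw [← hYdef] at h2
    rw [hYval] at h2
    linarith [h2]
  -- continuity of the exit value on [φ₀, φ₁]
  have hcont : ContinuousOn (fun φ => WPend.hval T (X φ)) (Icc φ₀ φ₁) := by
    intro φ hφIcc
    apply ContinuousAt.continuousWithinAt
    have hφIoo : φ ∈ Ioo 0 π :=
      ⟨lt_of_lt_of_le hφ₀pos hφIcc.1, lt_of_le_of_lt hφIcc.2 hφ₁pi⟩
    rw [Metric.continuousAt_iff]
    intro ε hε
    have hx0φ : X φ 0 ∈ Ioo 0 π := by rw [hX0]; exact hφIoo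
    rcases WPend.trichotomy hT.le (hXc φ) hx0φ with hz | hπ' | ⟨_, hstay⟩
    · obtain ⟨δ, hδ, hδ'⟩ := WPend.cont_at_zero hg hT hc1 hXd hXdd hX0 hdep hφIoo hz hε
      refine ⟨δ, hδ, ?_⟩
      intro x hx
      rw [Real.dist_eq] at hx ⊢
      exact hδ' x hx
    · -- reflected case
      set X' : ℝ → ℝ → ℝ := fun ψ t => π - X (π - ψ) t with hX'def
      set XD' : ℝ → ℝ → ℝ := fun ψ t => -XD (π - ψ) t with hXD'def
      have hXd' : ∀ ψ t, HasDerivAt (X' ψ) (XD' ψ t) t :=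
        fun ψ t => (hXd (π - ψ) t).const_sub π
      have hXdd' : ∀ ψ t, HasDerivAt (XD' ψ)
          (-g * Real.cos (X' ψ t) + (fun s => -u s) t * Real.sin (X' ψ t)) t := by
        intro ψ t
        have h1 := (hXdd (π - ψ) t).neg
        convert h1 using 1
        show -g * Real.cos (π - X (π - ψ) t) + -u t * Real.sin (π - X (π - ψ) t) = _
        rw [Real.cos_pi_sub, Real.sin_pi_sub]
        ring
        all_goals rfl
      have hX0' : ∀ ψ, X' ψ 0 = ψ := by
        intro ψ; rw [hX'def]; simp [hX0]
      have hdep' : ∀ φ' ψ' : ℝ, ∀ t ∈ Icc (0:ℝ) T, |X' ψ' t - X' φ' t| ≤ c * |ψ' - φ'| := by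
        intro φ' ψ' t ht
        have h1 := hdep (π - φ') (π - ψ') t ht
        have h2 : |X' ψ' t - X' φ' t| = |X (π - ψ') t - X (π - φ') t| := by
          rw [hX'def]
          simp only
          rw [show π - X (π - ψ') t - (π - X (π - φ') t)
            = -(X (π - ψ') t - X (π - φ') t) by ring, abs_neg]
        have h3 : |π - ψ' - (π - φ')| = |ψ' - φ'| := by
          rw [show π - ψ' - (π - φ') = -(ψ' - φ') by ring, abs_neg]
        rw [h2]
        rw [h3] at h1
        exact h1
      have hφ'Ioo : π - φ ∈ Ioo 0 π := ⟨by linarith [hφIoo.2], by linarith [hφIoo.1]⟩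
      have hX'eq : ∀ ψ, X' (π - ψ) = fun t => π - X ψ t := by
        intro ψ; funext t; rw [hX'def]; simp only
        rw [show π - (π - ψ) = ψ by ring]
      have h0' : WPend.hval T (X' (π - φ)) = 0 := by
        rw [hX'eq φ, WPend.hval_reflect, hπ', sub_self]
      obtain ⟨δ, hδ, hδ'⟩ := WPend.cont_at_zero hg hT hc1 hXd' hXdd' hX0' hdep' hφ'Ioo h0' hε
      refine ⟨δ, hδ, ?_⟩
      intro x hx
      rw [Real.dist_eq] at hx ⊢
      have h4 : |π - x - (π - φ)| < δ := by
        rw [show π - x - (π - φ) = -(x - φ) by ring, abs_neg]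
        exact hx
      have h5 := hδ' (π - x) h4
      rw [h0', hX'eq x, WPend.hval_reflect, sub_zero] at h5
      rw [hπ']
      rw [show π - WPend.hval T (X x) = -(WPend.hval T (X x) - π) by ring, abs_neg] at h5
      exact h5
    · obtain ⟨δ, hδ, hδ'⟩ := WPend.cont_at_stays hT hc1 hXc hdep hstay hε
      refine ⟨δ, hδ, ?_⟩
      intro x hx
      rw [Real.dist_eq] at hx ⊢
      exact hδ' x hx
  -- intermediate value theorem
  have hy' : y ∈ Icc (WPend.hval T (X φ₀)) (WPend.hval T (X φ₁)) := by
    rw [hval₀, hval₁]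
    exact ⟨hy.1.le, hy.2.le⟩
  obtain ⟨φ, hφmem, hφy0⟩ := intermediate_value_Icc hφ₀₁.le hcont hy'
  have hφy : WPend.hval T (X φ) = y := hφy0
  have hφIoo : φ ∈ Ioo 0 π :=
    ⟨lt_of_lt_of_le hφ₀pos hφmem.1, lt_of_le_of_lt hφmem.2 hφ₁pi⟩
  have hx0φ : X φ 0 ∈ Ioo 0 π := by rw [hX0]; exact hφIoo
  rcases WPend.trichotomy hT.le (hXc φ) hx0φ with hz | hπ' | ⟨hsT, hstay⟩
  · rw [hφy] at hz; exact absurd hz (ne_of_gt hy.1)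
  · rw [hφy] at hπ'; exact absurd hπ' (ne_of_lt hy.2)
  · have hd1 : deriv (X φ) = XD φ := funext fun t => (hXd φ t).deriv
    have hd2 : deriv (XD φ) = fun t => -g * Real.cos (X φ t) + u t * Real.sin (X φ t) :=
      funext fun t => (hXdd φ t).deriv
    have hXDc : Continuous (XD φ) := continuous_iff_continuousAt.2
      fun t => (hXdd φ t).differentiableAt.continuousAt
    refine ⟨φ, hφIoo, X φ, ⟨?_, ?_⟩, hX0 φ, ?_, hstay, ?_⟩
    · -- ContDiff ℝ 2
      have h2eq : (2 : WithTop ℕ∞) = 1 + 1 := by norm_num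
      rw [h2eq]
      apply contDiff_succ_iff_deriv.2
      refine ⟨fun t => (hXd φ t).differentiableAt, by simp, ?_⟩
      rw [hd1]
      apply contDiff_one_iff_deriv.2
      refine ⟨fun t => (hXdd φ t).differentiableAt, ?_⟩
      rw [hd2]
      exact (continuous_const.mul (Real.continuous_cos.comp (hXc φ))).add
        (hu.mul (Real.continuous_sin.comp (hXc φ)))
    · intro t
      rw [hd1, hd2]
    · rw [hd1]; exact hXD0 φ
    · rw [← (WPend.stays_sig hT.le hstay).2]
      exact hφy
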